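/- Let N be a positive integer, s, σ : Fin N → ℝ strictly positive sorted so that σ[n]/s[n] is nonincreasing, and 0 < L < ∑ n, σ[n]. Define c_k = (L − ∑_{n=k+1}^{N} σ[n]) / (∑_{n=1}^{k} s[n]) for k ∈ {1,...,N}. Then there exists k* ∈ {1,...,N} such that c_{k*} ≤ σ[k*]/s[k*], and either k* = N or σ[k*+1]/s[k*+1] < c_{k*}. -/

import Mathlib

open Finset

lemma mediant_aux {a b u v : ℝ} (hu : 0 < u) (hv : 0 < v)
    (h : b / v < (a + b) / (u + v)) : b / v < a / u := by
  rw [div_lt_div_iff₀ hv (by positivity)] at h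
  rw [div_lt_div_iff₀ hv hu]
  nlinarith

theorem stmt5 (N : ℕ) (hN : 0 < N) (s σ : Fin N → ℝ)
    (hs : ∀ n, 0 < s n) (hσ : ∀ n, 0 < σ n)
    (hsort : ∀ m n : Fin N, m ≤ n → σ n / s n ≤ σ m / s m)
    (L : ℝ) (hL : 0 < L) (hL2 : L < ∑ n, σ n)
    (c : ℕ → ℝ)
    (hc : ∀ k : ℕ, c k = (L - ∑ n ∈ univ.filter (fun n : Fin N => k ≤ (n : ℕ)), σ n) /
                        (∑ n ∈ univ.filter (fun n : Fin N => (n : ℕ) < k), s n)) :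
    ∃ k : ℕ, 1 ≤ k ∧ k ≤ N ∧
      (∀ n : Fin N, (n : ℕ) = k - 1 → c k ≤ σ n / s n) ∧
      (k = N ∨ ∀ n : Fin N, (n : ℕ) = k → σ n / s n < c k) := by
  classical
  set A : ℕ → ℝ := fun k => ∑ n ∈ univ.filter (fun n : Fin N => k ≤ (n : ℕ)), σ n with hA
  set B : ℕ → ℝ := fun k => ∑ n ∈ univ.filter (fun n : Fin N => (n : ℕ) < k), s n with hB
  have hcAB : ∀ k, c k = (L - A k) / B k := hc
  have hAstep : ∀ k (hk : k < N), A k = σ ⟨k, hk⟩ + A (k + 1) := by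
    intro k hk
    have hset : (univ.filter (fun n : Fin N => k ≤ (n : ℕ)))
        = insert ⟨k, hk⟩ (univ.filter (fun n : Fin N => k + 1 ≤ (n : ℕ))) := by
      ext n
      simp [Fin.ext_iff]
      omega
    have hnot : (⟨k, hk⟩ : Fin N) ∉ univ.filter (fun n : Fin N => k + 1 ≤ (n : ℕ)) := by
      simp
    simp only [hA, hset, sum_insert hnot]
  have hBstep : ∀ k (hk : k < N), B (k + 1) = B k + s ⟨k, hk⟩ := by
    intro k hk
    have hset : (univ.filter (fun n : Fin N => (n : ℕ) < k + 1))
        = insert ⟨k, hk⟩ (univ.filter (fun n : Fin N => (n : ℕ) < k)) := by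
      ext n
      simp [Fin.ext_iff]
      omega
    have hnot : (⟨k, hk⟩ : Fin N) ∉ univ.filter (fun n : Fin N => (n : ℕ) < k) := by
      simp
    simp only [hB, hset, sum_insert hnot]
    ring
  have hBpos : ∀ k, 1 ≤ k → 0 < B k := by
    intro k hk
    apply Finset.sum_pos (fun i _ => hs i)
    exact ⟨⟨0, hN⟩, by simp; omega⟩
  -- r j = σ_j / s_j
  set r : ℕ → ℝ := fun j => if h : j < N then σ ⟨j, h⟩ / s ⟨j, h⟩ else 0 with hr
  -- 1 satisfies the property c 1 ≤ r 0
  have hA0 : A 0 = ∑ n, σ n := by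
    simp [hA]
  have hB1 : B 1 = s ⟨0, hN⟩ := by
    have hset : (univ.filter (fun n : Fin N => (n : ℕ) < 1)) = {⟨0, hN⟩} := by
      ext n
      simp [Fin.ext_iff]
    simp only [hB]
    rw [hset, Finset.sum_singleton]
  have hP1 : c 1 ≤ r 0 := by
    have h1 : L - A 1 < σ ⟨0, hN⟩ := by
      have := hAstep 0 hN
      rw [hA0] at this
      linarith
    rw [hcAB, hB1, hr]
    simp only [dif_pos hN]
    exact le_of_lt ((div_lt_div_iff_of_pos_right (hs ⟨0, hN⟩)).mpr h1)
  set S : Finset ℕ := (Finset.Icc 1 N).filter (fun k => c k ≤ r (k - 1)) with hS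
  have h1S : 1 ∈ S := by
    simp [hS, Finset.mem_Icc]
    exact ⟨hN, hP1⟩
  have hSne : S.Nonempty := ⟨1, h1S⟩
  set k := S.max' hSne with hk
  have hkS : k ∈ S := S.max'_mem hSne
  have hk1 : 1 ≤ k := by
    have := (Finset.mem_filter.mp hkS).1
    exact (Finset.mem_Icc.mp this).1
  have hkN : k ≤ N := by
    have := (Finset.mem_filter.mp hkS).1
    exact (Finset.mem_Icc.mp this).2
  have hPk : c k ≤ r (k - 1) := (Finset.mem_filter.mp hkS).2
  refine ⟨k, hk1, hkN, ?_, ?_⟩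
  · intro n hn
    have hlt : k - 1 < N := hn ▸ n.isLt
    have hne : n = ⟨k - 1, hlt⟩ := Fin.ext hn
    rw [hne]
    simpa [hr, dif_pos hlt] using hPk
  · by_cases hNk : k = N
    · exact Or.inl hNk
    · right
      have hltN : k < N := lt_of_le_of_ne hkN hNk
      have hnotS : k + 1 ∉ S := by
        intro hmem
        have := S.le_max' _ hmem
        omega
      have hnot : ¬ (c (k + 1) ≤ r k) := by
        intro h
        apply hnotS
        simp only [hS, Finset.mem_filter, Finset.mem_Icc]
        exact ⟨⟨by omega, by omega⟩, by simpa using h⟩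
      push_neg at hnot
      rw [hr] at hnot
      simp only [dif_pos hltN] at hnot
      -- hnot : σ ⟨k,_⟩ / s ⟨k,_⟩ < c (k+1)
      have hmed : σ ⟨k, hltN⟩ / s ⟨k, hltN⟩ < c k := by
        have hc1 : c (k + 1) = ((L - A k) + σ ⟨k, hltN⟩) / (B k + s ⟨k, hltN⟩) := by
          rw [hcAB, hAstep k hltN, hBstep k hltN]
          ring_nf
        rw [hc1] at hnot
        rw [hcAB]
        exact mediant_aux (hBpos k hk1) (hs _) hnot
      intro n hn
      have hne : n = ⟨k, hltN⟩ := Fin.ext hn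
      rw [hne]
      exact hmed
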